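/- arXiv:2206.01975 — 4 statements merged into one kernel-verified Lean document; each statement's English description precedes it below -/
import Mathlib

section
/- Let d ≥ 1, ε > 0, let b ∈ ℝ^d be a constant vector, let u : ℝ^d → ℝ be twice continuously differentiable with compact support, set f := −εΔu + ⟨b, ∇u⟩ and v(x) := exp(−⟨b,x⟩) u(x). Then ε ∫_{ℝ^d} |∇v(x)|² dx + (1−ε)‖b‖² ∫_{ℝ^d} v(x)² dx = ∫_{ℝ^d} exp(−⟨b,x⟩) f(x) v(x) dx. -/
/- STATEMENT 7: energy identity for the transformed variable: with f = −εΔu + ⟨b,∇u⟩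
and v(x) = exp(−⟨b,x⟩)u(x), u being C² and compactly supported,
ε ∫ |∇v|² + (1−ε)‖b‖² ∫ v² = ∫ exp(−⟨b,x⟩) f v. -/

open MeasureTheory RealInnerProductSpace

/-- Laplacian of `u : ℝ^d → ℝ`, `Δu = Σᵢ ∂²u/∂xᵢ²`. -/
noncomputable def lap {d : ℕ} (u : EuclideanSpace ℝ (Fin d) → ℝ)
    (x : EuclideanSpace ℝ (Fin d)) : ℝ :=
  ∑ i, fderiv ℝ (fun y => fderiv ℝ u y (EuclideanSpace.single i 1)) x
    (EuclideanSpace.single i 1)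

open Set in

lemma pi_integral_fderiv_eq_zero {n : ℕ} (g : (Fin (n+1) → ℝ) → ℝ)
    (hg : ContDiff ℝ 1 g) (hgc : HasCompactSupport g) (w : Fin (n+1) → ℝ) :
    ∫ x, fderiv ℝ g x w = 0 := by
  obtain ⟨R, hR0, hsupp⟩ : ∃ R, 0 < R ∧ tsupport g ⊆ Metric.closedBall 0 R := by
    rcases (hgc.isCompact.isBounded.subset_closedBall_lt 0 0) with ⟨R, hR, h⟩
    exact ⟨R, hR, h⟩
  have hgz : ∀ y : Fin (n+1) → ℝ, R < ‖y‖ → g y = 0 := by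
    intro y hy
    apply image_eq_zero_of_notMem_tsupport
    intro hmem
    have := hsupp hmem
    simp [Metric.mem_closedBall] at this
    linarith
  set a : Fin (n+1) → ℝ := fun _ => -(R+1) with ha
  set c : Fin (n+1) → ℝ := fun _ => (R+1) with hc
  have hle : a ≤ c := fun i => by simp [ha, hc]; linarith
  have hdiff : Differentiable ℝ g := hg.differentiable one_ne_zero
  have key := MeasureTheory.integral_divergence_of_hasFDerivAt_off_countable' a c hle
    (fun i x => w i • g x) (fun i x => w i • fderiv ℝ g x) ∅ Set.countable_empty
    (fun i => ((hg.continuous).const_smul (w i)).continuousOn)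
    (fun x _ i => ((hdiff x).hasFDerivAt).const_smul (w i))
    (by
      apply Continuous.integrableOn_Icc
      have hcf : Continuous (fderiv ℝ g) := hg.continuous_fderiv one_ne_zero
      exact continuous_finset_sum _ fun i _ =>
        ((hcf.clm_apply continuous_const).const_smul (w i)))
  -- faces vanish
  have hface : ∀ (i : Fin (n+1)) (val : ℝ), |val| = R + 1 → ∀ x : Fin n → ℝ,
      w i * g (i.insertNth val x) = 0 := by
    intro i val hval x
    set y : Fin (n+1) → ℝ := i.insertNth val x with hy
    have hlt : R < ‖y‖ := by
      have h1 : |y i| ≤ ‖y‖ := by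
        simpa using norm_le_pi_norm y i
      rw [hy] at h1
      rw [Fin.insertNth_apply_same] at h1
      rw [hval] at h1; linarith
    rw [hy] at hlt
    rw [hgz _ hlt, mul_zero]
  have hRHS : (∑ i : Fin (n + 1),
      ((∫ x in Icc (a ∘ i.succAbove) (c ∘ i.succAbove), w i * g (i.insertNth (c i) x)) -
        ∫ x in Icc (a ∘ i.succAbove) (c ∘ i.succAbove), w i * g (i.insertNth (a i) x))) = 0 := by
    apply Finset.sum_eq_zero
    intro i _
    have h1 : ∀ x : Fin n → ℝ, w i * g (i.insertNth (c i) x) = 0 :=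
      hface i (c i) (by simp only [hc]; rw [abs_of_nonneg (by linarith)])
    have h2 : ∀ x : Fin n → ℝ, w i * g (i.insertNth (a i) x) = 0 :=
      hface i (a i) (by simp only [ha]; rw [abs_of_nonpos (by linarith)]; ring)
    simp [h1, h2]
  rw [show (∑ i : Fin (n + 1),
      ((∫ (x : Fin n → ℝ) in Icc (a ∘ i.succAbove) (c ∘ i.succAbove), (fun i x => w i • g x) i (i.insertNth (c i) x)) -
        ∫ (x : Fin n → ℝ) in Icc (a ∘ i.succAbove) (c ∘ i.succAbove), (fun i x => w i • g x) i (i.insertNth (a i) x))) = 0 from by simpa [smul_eq_mul] using hRHS] at key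
  -- the divergence equals fderiv g x w
  have hdiv : ∀ x, (∑ i : Fin (n+1), (w i • fderiv ℝ g x) (Pi.single i 1)) = fderiv ℝ g x w := by
    intro x
    have hw : w = ∑ i : Fin (n+1), w i • (Pi.single i 1 : Fin (n+1) → ℝ) := by
      ext j
      simp [Finset.sum_apply, Pi.single_apply]
    conv_rhs => rw [hw]
    rw [map_sum]
    simp
  -- extend from box to full space
  have hext : ∀ x, x ∉ Icc a c → fderiv ℝ g x w = 0 := by
    intro x hx
    have : fderiv ℝ g x = 0 := by
      by_contra h
      have hx' : x ∈ tsupport g := support_fderiv_subset ℝ (by simpa using h)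
      have hxball := hsupp hx'
      simp only [Metric.mem_closedBall, dist_zero_right] at hxball
      apply hx
      constructor <;> intro i
      · simp only [ha]
        have := norm_le_pi_norm x i
        simp only [Real.norm_eq_abs] at this
        have := abs_le.mp (le_trans this hxball)
        linarith [this.1]
      · simp only [hc]
        have := norm_le_pi_norm x i
        simp only [Real.norm_eq_abs] at this
        have := abs_le.mp (le_trans this hxball)
        linarith [this.2]
    simp [this]
  have hfull : (∫ x in Icc a c, fderiv ℝ g x w) = ∫ x, fderiv ℝ g x w :=
    setIntegral_eq_integral_of_forall_compl_eq_zero hext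
  calc ∫ x, fderiv ℝ g x w = ∫ x in Icc a c, fderiv ℝ g x w := hfull.symm
    _ = ∫ x in Icc a c, ∑ i : Fin (n+1), (w i • fderiv ℝ g x) (Pi.single i 1) := by
        exact setIntegral_congr_fun measurableSet_Icc fun x _ => (hdiv x).symm
    _ = 0 := key

lemma euc_integral_fderiv_eq_zero {n : ℕ} (g : EuclideanSpace ℝ (Fin (n+1)) → ℝ)
    (hg : ContDiff ℝ 1 g) (hgc : HasCompactSupport g) (w : EuclideanSpace ℝ (Fin (n+1))) :
    ∫ x, fderiv ℝ g x w = 0 := by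
  set L : EuclideanSpace ℝ (Fin (n+1)) ≃L[ℝ] (Fin (n+1) → ℝ) :=
    EuclideanSpace.equiv (Fin (n+1)) ℝ with hL
  set g' : (Fin (n+1) → ℝ) → ℝ := g ∘ L.symm with hg'def
  have hg' : ContDiff ℝ 1 g' := hg.comp L.symm.contDiff
  have hgc' : HasCompactSupport g' := hgc.comp_homeomorph L.symm.toHomeomorph
  have key := pi_integral_fderiv_eq_zero g' hg' hgc' (L w)
  have mp := EuclideanSpace.volume_preserving_symm_measurableEquiv_toLp (Fin (n+1))
  have htrans : ∫ x : EuclideanSpace ℝ (Fin (n+1)),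
      fderiv ℝ g' ((MeasurableEquiv.toLp 2 (Fin (n+1) → ℝ)).symm x) (L w)
      = ∫ y : Fin (n+1) → ℝ, fderiv ℝ g' y (L w) :=
    mp.integral_comp (MeasurableEquiv.toLp 2 (Fin (n+1) → ℝ)).symm.measurableEmbedding (fun y => fderiv ℝ g' y (L w))
  have hpt : ∀ x : EuclideanSpace ℝ (Fin (n+1)),
      fderiv ℝ g' ((MeasurableEquiv.toLp 2 (Fin (n+1) → ℝ)).symm x) (L w) = fderiv ℝ g x w := by
    intro x
    have h1 : (MeasurableEquiv.toLp 2 (Fin (n+1) → ℝ)).symm x = L x := rfl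
    rw [h1, hg'def, L.symm.comp_right_fderiv]
    simp
  rw [← key, ← htrans]
  exact integral_congr_ae (Filter.Eventually.of_forall (fun x => (hpt x).symm))

noncomputable def du {d : ℕ} (u : EuclideanSpace ℝ (Fin d) → ℝ) (i : Fin d)
    (x : EuclideanSpace ℝ (Fin d)) : ℝ :=
  fderiv ℝ u x (EuclideanSpace.single i 1)

noncomputable def Faux {d : ℕ} (ε : ℝ) (b : EuclideanSpace ℝ (Fin d))
    (u : EuclideanSpace ℝ (Fin d) → ℝ) (i : Fin d) (x : EuclideanSpace ℝ (Fin d)) : ℝ :=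
  ε * Real.exp (-⟪b, x⟫) ^ 2 * u x * du u i x
    - 1/2 * (Real.exp (-⟪b, x⟫) ^ 2 * (u x) ^ 2) * b i

variable {d : ℕ} {b : EuclideanSpace ℝ (Fin d)} {u : EuclideanSpace ℝ (Fin d) → ℝ} {ε : ℝ}

lemma hasFDerivAt_phi (x : EuclideanSpace ℝ (Fin d)) :
    HasFDerivAt (fun y : EuclideanSpace ℝ (Fin d) => Real.exp (-⟪b, y⟫))
      (Real.exp (-⟪b, x⟫) • -(innerSL ℝ b)) x := by
  exact ((innerSL ℝ b).hasFDerivAt.neg).exp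

lemma du_contDiff (hu : ContDiff ℝ 2 u) (i : Fin d) : ContDiff ℝ 1 (du u i) :=
  (hu.fderiv_right (by norm_num)).clm_apply contDiff_const

lemma Faux_contDiff (hu : ContDiff ℝ 2 u) (i : Fin d) : ContDiff ℝ 1 (Faux ε b u i) := by
  have hφ : ContDiff ℝ 1 (fun y : EuclideanSpace ℝ (Fin d) => Real.exp (-⟪b, y⟫)) :=
    Real.contDiff_exp.comp (innerSL ℝ b).contDiff.neg
  have hu1 : ContDiff ℝ 1 u := hu.of_le (by norm_num)
  exact (((contDiff_const.mul (hφ.pow 2)).mul hu1).mul (du_contDiff hu i)).sub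
    ((contDiff_const.mul ((hφ.pow 2).mul (hu1.pow 2))).mul contDiff_const)

lemma innerSL_single (i : Fin d) : (innerSL ℝ b) (EuclideanSpace.single i 1) = b i := by
  simp [EuclideanSpace.inner_single_right]

lemma fderiv_Faux (hu : ContDiff ℝ 2 u) (i : Fin d) (x : EuclideanSpace ℝ (Fin d)) :
    fderiv ℝ (Faux ε b u i) x (EuclideanSpace.single i 1)
      = ε * Real.exp (-⟪b, x⟫) ^ 2 * du u i x ^ 2
        - 2 * ε * b i * Real.exp (-⟪b, x⟫) ^ 2 * u x * du u i x
        + ε * Real.exp (-⟪b, x⟫) ^ 2 * u x * fderiv ℝ (du u i) x (EuclideanSpace.single i 1)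
        - b i * Real.exp (-⟪b, x⟫) ^ 2 * u x * du u i x
        + b i ^ 2 * Real.exp (-⟪b, x⟫) ^ 2 * (u x) ^ 2 := by
  have hu1 : HasFDerivAt u (fderiv ℝ u x) x :=
    (hu.differentiable (by norm_num) x).hasFDerivAt
  have hdu1 : HasFDerivAt (du u i) (fderiv ℝ (du u i) x) x :=
    ((du_contDiff hu i).differentiable one_ne_zero x).hasFDerivAt
  have hφ1 := hasFDerivAt_phi (b := b) x
  have hφ2 : HasFDerivAt (fun y : EuclideanSpace ℝ (Fin d) => Real.exp (-⟪b, y⟫) ^ 2)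
      (Real.exp (-⟪b, x⟫) • (Real.exp (-⟪b, x⟫) • -(innerSL ℝ b))
        + Real.exp (-⟪b, x⟫) • (Real.exp (-⟪b, x⟫) • -(innerSL ℝ b))) x := by
    simpa only [pow_two, Pi.mul_def] using hφ1.mul hφ1
  have hu2 : HasFDerivAt (fun y : EuclideanSpace ℝ (Fin d) => u y ^ 2)
      (u x • fderiv ℝ u x + u x • fderiv ℝ u x) x := by
    simpa only [pow_two, Pi.mul_def] using hu1.mul hu1
  have hF1 := (((hφ2.const_mul ε).mul hu1).mul hdu1).sub
    (((hφ2.mul hu2).const_mul (1/2 : ℝ)).mul_const (b i))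
  unfold Faux
  rw [show (fun x => ε * Real.exp (-⟪b, x⟫) ^ 2 * u x * du u i x - 1 / 2 * (Real.exp (-⟪b, x⟫) ^ 2 * u x ^ 2) * b i) = ((fun y => ε * Real.exp (-⟪b, y⟫) ^ 2) * u * du u i - fun y => 1 / 2 * ((fun y => Real.exp (-⟪b, y⟫) ^ 2) * fun y => u y ^ 2) y * b i) from rfl, hF1.fderiv]
  simp only [ContinuousLinearMap.coe_sub', ContinuousLinearMap.coe_smul',
    ContinuousLinearMap.add_apply, ContinuousLinearMap.sub_apply,
    ContinuousLinearMap.smul_apply, ContinuousLinearMap.neg_apply,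
    Pi.sub_apply, Pi.smul_apply, Pi.neg_apply, smul_eq_mul, innerSL_single, Pi.mul_apply]
  have hdux : fderiv ℝ u x (EuclideanSpace.single i 1) = du u i x := rfl
  rw [hdux]
  ring

lemma coord_eq_inner (y : EuclideanSpace ℝ (Fin d)) (i : Fin d) :
    ⟪y, EuclideanSpace.single i 1⟫ = y i := by
  simp [EuclideanSpace.inner_single_right]

lemma gradient_inner_eq (g : EuclideanSpace ℝ (Fin d) → ℝ) (x y : EuclideanSpace ℝ (Fin d)) :
    ⟪gradient g x, y⟫ = fderiv ℝ g x y := by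
  rw [gradient]
  exact InnerProductSpace.toDual_symm_apply

lemma norm_sq_sum (y : EuclideanSpace ℝ (Fin d)) : ‖y‖ ^ 2 = ∑ i, (y i) ^ 2 := by
  rw [EuclideanSpace.norm_eq, Real.sq_sqrt (by positivity)]
  simp [sq_abs]

lemma clm_apply_decomp (ℓ : EuclideanSpace ℝ (Fin d) →L[ℝ] ℝ) :
    ℓ b = ∑ i, b i * ℓ (EuclideanSpace.single i 1) := by
  have hb : b = ∑ i, b i • EuclideanSpace.single i 1 := by
    ext j
    rw [show ((∑ i, b i • EuclideanSpace.single i 1 : EuclideanSpace ℝ (Fin d)) j)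
        = ∑ i, (b i • EuclideanSpace.single i 1 : EuclideanSpace ℝ (Fin d)) j from
      by rw [WithLp.ofLp_sum, Finset.sum_apply]]
    simp [EuclideanSpace.single_apply]
  conv_lhs => rw [hb]
  rw [map_sum]
  simp [smul_eq_mul]

lemma fderiv_v_apply (hu : ContDiff ℝ 2 u) (x w : EuclideanSpace ℝ (Fin d)) :
    fderiv ℝ (fun y => Real.exp (-⟪b, y⟫) * u y) x w
      = Real.exp (-⟪b, x⟫) * (fderiv ℝ u x w - ⟪b, w⟫ * u x) := by
  have hu1 : HasFDerivAt u (fderiv ℝ u x) x :=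
    (hu.differentiable (by norm_num) x).hasFDerivAt
  have h := (hasFDerivAt_phi (b := b) x).mul hu1
  rw [show (fun y => Real.exp (-⟪b, y⟫) * u y) = (fun y => Real.exp (-⟪b, y⟫)) * u from rfl, h.fderiv]
  simp only [ContinuousLinearMap.add_apply, ContinuousLinearMap.coe_smul',
    Pi.smul_apply, ContinuousLinearMap.neg_apply, smul_eq_mul, innerSL_apply_apply]
  ring

lemma pointwise_identity (hu : ContDiff ℝ 2 u)
    (f v : EuclideanSpace ℝ (Fin d) → ℝ)
    (hf : ∀ x, f x = -ε * lap u x + ⟪b, gradient u x⟫)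
    (hv : ∀ x, v x = Real.exp (-⟪b, x⟫) * u x) (x : EuclideanSpace ℝ (Fin d)) :
    ε * ‖gradient v x‖ ^ 2 + (1 - ε) * ‖b‖ ^ 2 * v x ^ 2
        - Real.exp (-⟪b, x⟫) * f x * v x
      = ∑ i, fderiv ℝ (Faux ε b u i) x (EuclideanSpace.single i 1) := by
  have hvfun : v = fun y => Real.exp (-⟪b, y⟫) * u y := funext hv
  have e1 : ‖gradient v x‖ ^ 2
      = ∑ i, (Real.exp (-⟪b, x⟫) * (du u i x - b i * u x)) ^ 2 := by
    rw [norm_sq_sum]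
    refine Finset.sum_congr rfl fun i _ => ?_
    rw [← coord_eq_inner (gradient v x) i, gradient_inner_eq, hvfun,
      fderiv_v_apply hu x (EuclideanSpace.single i 1)]
    rw [show ⟪b, EuclideanSpace.single i 1⟫ = b i from innerSL_single i]
    rw [show fderiv ℝ u x (EuclideanSpace.single i 1) = du u i x from rfl]
  have e2 : ‖b‖ ^ 2 = ∑ i, (b i) ^ 2 := norm_sq_sum b
  have e4 : f x = ∑ i, (-ε * fderiv ℝ (du u i) x (EuclideanSpace.single i 1)
      + b i * du u i x) := by
    rw [hf x]
    have h1 : ⟪b, gradient u x⟫ = ∑ i, b i * du u i x := by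
      rw [real_inner_comm, gradient_inner_eq, clm_apply_decomp]
      exact Finset.sum_congr rfl fun i _ => rfl
    have h2 : lap u x = ∑ i, fderiv ℝ (du u i) x (EuclideanSpace.single i 1) := rfl
    rw [h1, h2, Finset.sum_add_distrib, Finset.mul_sum]
  rw [e1, e2, e4, hv x]
  simp only [Finset.mul_sum, Finset.sum_mul]
  rw [← Finset.sum_add_distrib, ← Finset.sum_sub_distrib]
  refine Finset.sum_congr rfl fun i _ => ?_
  rw [fderiv_Faux hu i x]
  ring

lemma Faux_hasCompactSupport (huc : HasCompactSupport u) (i : Fin d) :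
    HasCompactSupport (Faux ε b u i) := by
  apply HasCompactSupport.intro huc
  intro x hx
  rw [Faux, image_eq_zero_of_notMem_tsupport hx]
  ring

lemma euc_int_zero {d : ℕ} (hd : 1 ≤ d) (g : EuclideanSpace ℝ (Fin d) → ℝ)
    (hg : ContDiff ℝ 1 g) (hgc : HasCompactSupport g) (w : EuclideanSpace ℝ (Fin d)) :
    ∫ x, fderiv ℝ g x w = 0 := by
  cases d with
  | zero => omega
  | succ n => exact euc_integral_fderiv_eq_zero g hg hgc w

theorem exp_change_of_variable_energy_identity
    (d : ℕ) (hd : 1 ≤ d) (ε : ℝ) (hε : 0 < ε)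
    (b : EuclideanSpace ℝ (Fin d))
    (u : EuclideanSpace ℝ (Fin d) → ℝ)
    (hu : ContDiff ℝ 2 u) (huc : HasCompactSupport u)
    (f : EuclideanSpace ℝ (Fin d) → ℝ)
    (hf : ∀ x, f x = -ε * lap u x + ⟪b, gradient u x⟫)
    (v : EuclideanSpace ℝ (Fin d) → ℝ)
    (hv : ∀ x, v x = Real.exp (-⟪b, x⟫) * u x) :
    ε * (∫ x : EuclideanSpace ℝ (Fin d), ‖gradient v x‖ ^ 2)
        + (1 - ε) * ‖b‖ ^ 2 * ∫ x : EuclideanSpace ℝ (Fin d), (v x) ^ 2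
      = ∫ x : EuclideanSpace ℝ (Fin d), Real.exp (-⟪b, x⟫) * f x * v x := by
  have hvfun : v = fun y => Real.exp (-⟪b, y⟫) * u y := funext hv
  have hφcd : ContDiff ℝ 1 (fun y : EuclideanSpace ℝ (Fin d) => Real.exp (-⟪b, y⟫)) :=
    Real.contDiff_exp.comp (innerSL ℝ b).contDiff.neg
  have hu1cd : ContDiff ℝ 1 u := hu.of_le (by norm_num)
  have hv_cd : ContDiff ℝ 1 v := by rw [hvfun]; exact hφcd.mul hu1cd
  have hvc : HasCompactSupport v := by
    apply HasCompactSupport.intro huc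
    intro x hx
    rw [hv x, image_eq_zero_of_notMem_tsupport hx, mul_zero]
  -- integrability of the three integrands
  have hgradcont : Continuous fun x => gradient v x := by
    have h1 : Continuous fun x => fderiv ℝ v x := hv_cd.continuous_fderiv one_ne_zero
    exact ((InnerProductSpace.toDual ℝ _).symm.continuous).comp h1
  have hint1 : Integrable (fun x : EuclideanSpace ℝ (Fin d) => ‖gradient v x‖ ^ 2) := by
    apply Continuous.integrable_of_hasCompactSupport ((hgradcont.norm).pow 2)
    apply HasCompactSupport.intro hvc
    intro x hx
    have : fderiv ℝ v x = 0 := by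
      by_contra h
      exact hx (support_fderiv_subset ℝ (by simpa using h))
    simp [gradient, this]
  have hint2 : Integrable (fun x : EuclideanSpace ℝ (Fin d) => v x ^ 2) := by
    apply Continuous.integrable_of_hasCompactSupport ((hv_cd.continuous).pow 2)
    apply HasCompactSupport.intro hvc
    intro x hx
    simp [image_eq_zero_of_notMem_tsupport hx]
  have hfcont : Continuous f := by
    have hffun : f = fun x => -ε * lap u x + ⟪b, gradient u x⟫ := funext hf
    rw [hffun]
    have hl : Continuous fun x => lap u x := by
      apply continuous_finset_sum
      intro i _
      exact ((du_contDiff hu i).continuous_fderiv one_ne_zero).clm_apply continuous_const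
    have hbg : Continuous fun x : EuclideanSpace ℝ (Fin d) => ⟪b, gradient u x⟫ := by
      have : (fun x : EuclideanSpace ℝ (Fin d) => ⟪b, gradient u x⟫)
          = fun x => fderiv ℝ u x b := by
        funext x
        rw [real_inner_comm, gradient_inner_eq]
      rw [this]
      exact (hu1cd.continuous_fderiv one_ne_zero).clm_apply continuous_const
    exact (continuous_const.mul hl).add hbg
  have hint3 : Integrable (fun x : EuclideanSpace ℝ (Fin d) =>
      Real.exp (-⟪b, x⟫) * f x * v x) := by
    apply Continuous.integrable_of_hasCompactSupport
      ((hφcd.continuous.mul hfcont).mul hv_cd.continuous)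
    apply HasCompactSupport.intro hvc
    intro x hx
    simp [image_eq_zero_of_notMem_tsupport hx]
  -- divergence terms integrate to zero
  have hDFint : ∀ i : Fin d, Integrable (fun x : EuclideanSpace ℝ (Fin d) =>
      fderiv ℝ (Faux ε b u i) x (EuclideanSpace.single i 1)) := by
    intro i
    apply Continuous.integrable_of_hasCompactSupport
      (((Faux_contDiff hu i).continuous_fderiv one_ne_zero).clm_apply continuous_const)
    apply HasCompactSupport.intro (Faux_hasCompactSupport huc i)
    intro x hx
    have : fderiv ℝ (Faux ε b u i) x = 0 := by
      by_contra h
      exact hx (support_fderiv_subset ℝ (by simpa using h))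
    simp [this]
  have hDFzero : ∀ i : Fin d,
      (∫ x, fderiv ℝ (Faux ε b u i) x (EuclideanSpace.single i 1)) = 0 := fun i =>
    euc_int_zero hd (Faux ε b u i) (Faux_contDiff hu i) (Faux_hasCompactSupport huc i) _
  have key : (∫ x, (ε * ‖gradient v x‖ ^ 2 + (1 - ε) * ‖b‖ ^ 2 * v x ^ 2
      - Real.exp (-⟪b, x⟫) * f x * v x)) = 0 := by
    rw [integral_congr_ae (Filter.Eventually.of_forall
      (pointwise_identity hu f v hf hv))]
    rw [integral_finset_sum _ (fun i _ => hDFint i)]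
    exact Finset.sum_eq_zero fun i _ => hDFzero i
  have hI1 : Integrable (fun x : EuclideanSpace ℝ (Fin d) => ε * ‖gradient v x‖ ^ 2) :=
    hint1.const_mul ε
  have hI2 : Integrable (fun x : EuclideanSpace ℝ (Fin d) =>
      (1 - ε) * ‖b‖ ^ 2 * v x ^ 2) := hint2.const_mul ((1 - ε) * ‖b‖ ^ 2)
  have hintA : Integrable (fun x : EuclideanSpace ℝ (Fin d) =>
      ε * ‖gradient v x‖ ^ 2 + (1 - ε) * ‖b‖ ^ 2 * v x ^ 2) := by exact hI1.add hI2
  rw [integral_sub hintA hint3, integral_add hI1 hI2,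
    integral_const_mul, integral_const_mul, sub_eq_zero] at key
  exact key
end

section
/- Let d ≥ 1, 0 < ε < 1, let b ∈ ℝ^d be a nonzero constant vector, let u : ℝ^d → ℝ be twice continuously differentiable with compact support, and set f := −εΔu + ⟨b, ∇u⟩. Assume c_b ≤ exp(−⟨b,x⟩) ≤ C_b for all x in the support of u, with 0 < c_b ≤ C_b. Then ε ∫_{ℝ^d} |∇u(x)|² dx ≤ C_b / (c_b (1−ε)‖b‖²) · ‖f‖_{L²}². -/
/- STATEMENT 10: H¹-seminorm bound: for constant b ≠ 0, 0 < ε < 1, u C² with compact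
support, f = −εΔu + ⟨b,∇u⟩ and c_b ≤ exp(−⟨b,x⟩) ≤ C_b on the support of u,
ε ∫ |∇u|² ≤ C_b/(c_b(1−ε)‖b‖²) ‖f‖_{L²}². -/

open MeasureTheory RealInnerProductSpace

section H1Aux

variable {d : ℕ}

local notation "E" => EuclideanSpace ℝ (Fin d)

private lemma h1_ibp (f g : E → ℝ) (v : E) (hf : ContDiff ℝ 1 f) (hg : ContDiff ℝ 1 g)
    (hgc : HasCompactSupport g) :
    ∫ x, f x * fderiv ℝ g x v = - ∫ x, fderiv ℝ f x v * g x := by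
  have hgC : Continuous fun x => fderiv ℝ g x v :=
    ((hg.fderiv_right (m := 0) (by norm_num)).clm_apply contDiff_const).continuous
  have hfC : Continuous fun x => fderiv ℝ f x v :=
    ((hf.fderiv_right (m := 0) (by norm_num)).clm_apply contDiff_const).continuous
  apply integral_mul_fderiv_eq_neg_fderiv_mul_of_integrable
  · exact (hfC.mul hg.continuous).integrable_of_hasCompactSupport hgc.mul_left
  · exact (hf.continuous.mul hgC).integrable_of_hasCompactSupport
      ((hgc.fderiv_apply ℝ v).mul_left)
  · exact (hf.continuous.mul hg.continuous).integrable_of_hasCompactSupport hgc.mul_left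
  · exact fun x _ => hf.differentiable (by norm_num) x
  · exact fun x _ => hg.differentiable (by norm_num) x

end H1Aux

set_option maxHeartbeats 1000000 in
theorem H1_seminorm_bound
    (d : ℕ) (hd : 1 ≤ d) (ε : ℝ) (hε : 0 < ε) (hε1 : ε < 1)
    (b : EuclideanSpace ℝ (Fin d)) (hb : b ≠ 0)
    (u : EuclideanSpace ℝ (Fin d) → ℝ)
    (hu : ContDiff ℝ 2 u) (huc : HasCompactSupport u)
    (f : EuclideanSpace ℝ (Fin d) → ℝ)
    (hf : ∀ x, f x = -ε * lap u x + ⟪b, gradient u x⟫)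
    (cb Cb : ℝ) (hcb : 0 < cb) (hcbCb : cb ≤ Cb)
    (hbound : ∀ x ∈ tsupport u,
      cb ≤ Real.exp (-⟪b, x⟫) ∧ Real.exp (-⟪b, x⟫) ≤ Cb) :
    ε * ∫ x : EuclideanSpace ℝ (Fin d), ‖gradient u x‖ ^ 2
      ≤ Cb / (cb * (1 - ε) * ‖b‖ ^ 2)
          * ∫ x : EuclideanSpace ℝ (Fin d), (f x) ^ 2 := by
  have hu1 : ContDiff ℝ 1 u := hu.of_le (by norm_num)
  set w : EuclideanSpace ℝ (Fin d) → ℝ := fun x => Real.exp (-⟪b, x⟫) with hwdef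
  have hw_pos : ∀ x, 0 < w x := fun x => Real.exp_pos _
  have hw_cd : ContDiff ℝ 2 w :=
    (Real.contDiff_exp.of_le le_top).comp ((innerSL ℝ b).contDiff.neg)
  have hw_fderiv : ∀ x v, fderiv ℝ w x v = -(⟪b, v⟫ * w x) := by
    intro x v
    have h : HasFDerivAt (fun y : EuclideanSpace ℝ (Fin d) => -⟪b, y⟫)
        (-(innerSL ℝ b : EuclideanSpace ℝ (Fin d) →L[ℝ] ℝ)) x :=
      ((innerSL ℝ b).hasFDerivAt).neg
    have h2 := h.exp
    rw [hwdef]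
    rw [h2.fderiv]
    simp
    ring
  -- gradient facts
  have hgrad : ∀ (x v : EuclideanSpace ℝ (Fin d)), ⟪gradient u x, v⟫ = fderiv ℝ u x v := by
    intro x v; simp [gradient, InnerProductSpace.toDual_symm_apply]
  have hgi : ∀ (x : EuclideanSpace ℝ (Fin d)) (i : Fin d),
      gradient u x i = fderiv ℝ u x (EuclideanSpace.single i 1) := by
    intro x i
    rw [← hgrad x (EuclideanSpace.single i 1)]
    simp only [EuclideanSpace.inner_single_right, one_mul, conj_trivial]
  have hnorm : ∀ x, ‖gradient u x‖ ^ 2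
      = ∑ i, (fderiv ℝ u x (EuclideanSpace.single i 1)) ^ 2 := by
    intro x
    rw [← real_inner_self_eq_norm_sq]
    simp only [PiLp.inner_apply, RCLike.inner_apply, hgi, sq, conj_trivial]
  have hinnerb : ∀ x, ⟪b, gradient u x⟫ = fderiv ℝ u x b :=
    fun x => (real_inner_comm _ _).trans (hgrad x b)
  have hinnerb' : ∀ x, fderiv ℝ u x b
      = ∑ i, b i * fderiv ℝ u x (EuclideanSpace.single i 1) := by
    intro x; rw [← hinnerb x]; simp only [PiLp.inner_apply, RCLike.inner_apply, hgi, conj_trivial]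
    exact Finset.sum_congr rfl fun i _ => mul_comm _ _
  -- support facts
  have hfd0 : ∀ (v : EuclideanSpace ℝ (Fin d)) {x}, x ∉ tsupport u → fderiv ℝ u x v = 0 := by
    intro v x hx
    have h : x ∉ Function.support (fderiv ℝ u) := fun h => hx (support_fderiv_subset ℝ h)
    rw [Function.notMem_support.mp h]; rfl
  have hgrad0 : ∀ {x}, x ∉ tsupport u → gradient u x = 0 := by
    intro x hx
    have h : x ∉ Function.support (fderiv ℝ u) := fun h => hx (support_fderiv_subset ℝ h)
    simp [gradient, Function.notMem_support.mp h]
  have hu0 : ∀ {x}, x ∉ tsupport u → u x = 0 := fun hx => image_eq_zero_of_notMem_tsupport hx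
  have hts : ∀ v : EuclideanSpace ℝ (Fin d),
      tsupport (fun y => fderiv ℝ u y v) ⊆ tsupport u := by
    intro v
    apply closure_minimal _ (isClosed_tsupport u)
    intro x hx
    by_contra hxx
    exact (Function.mem_support.mp hx) (hfd0 v hxx)
  have hd20 : ∀ (i : Fin d) {x}, x ∉ tsupport u →
      fderiv ℝ (fun y => fderiv ℝ u y (EuclideanSpace.single i 1)) x
        (EuclideanSpace.single i 1) = 0 := by
    intro i x hx
    have hx2 : x ∉ tsupport (fun y => fderiv ℝ u y (EuclideanSpace.single i 1)) :=
      fun h => hx (hts _ h)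
    have h : x ∉ Function.support
        (fderiv ℝ (fun y => fderiv ℝ u y (EuclideanSpace.single i 1))) :=
      fun h => hx2 (support_fderiv_subset ℝ h)
    rw [Function.notMem_support.mp h]; rfl
  have hlap0 : ∀ {x}, x ∉ tsupport u → lap u x = 0 := by
    intro x hx
    rw [lap]
    exact Finset.sum_eq_zero fun i _ => hd20 i hx
  have hf0 : ∀ {x}, x ∉ tsupport u → f x = 0 := by
    intro x hx
    rw [hf x, hlap0 hx, hgrad0 hx]
    simp
  -- continuity and integrability toolkit
  have hDcd : ∀ v : EuclideanSpace ℝ (Fin d), ContDiff ℝ 1 (fun x => fderiv ℝ u x v) :=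
    fun v => (hu.fderiv_right (m := 1) (by norm_num)).clm_apply contDiff_const
  have hDc : ∀ v : EuclideanSpace ℝ (Fin d), Continuous (fun x => fderiv ℝ u x v) :=
    fun v => (hDcd v).continuous
  have hD2c : ∀ i : Fin d, Continuous (fun x =>
      fderiv ℝ (fun y => fderiv ℝ u y (EuclideanSpace.single i 1)) x
        (EuclideanSpace.single i 1)) :=
    fun i => (((hDcd _).fderiv_right (m := 0) (by norm_num)).clm_apply contDiff_const).continuous
  have hDcs : ∀ v : EuclideanSpace ℝ (Fin d),
      HasCompactSupport fun x => fderiv ℝ u x v := fun v => huc.fderiv_apply ℝ v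
  have hlapc : Continuous (lap u) := by
    unfold lap
    exact continuous_finset_sum _ fun i _ => hD2c i
  have hfc : Continuous f := by
    have : f = fun x => -ε * lap u x + fderiv ℝ u x b :=
      funext fun x => by rw [hf x, hinnerb x]
    rw [this]
    exact (continuous_const.mul hlapc).add (hDc b)
  have hgradnc : Continuous fun x => ‖gradient u x‖ ^ 2 := by
    rw [show (fun x => ‖gradient u x‖ ^ 2)
        = fun x => ∑ i, (fderiv ℝ u x (EuclideanSpace.single i 1)) ^ 2 from funext hnorm]
    exact continuous_finset_sum _ fun i _ => (hDc _).pow 2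
  have hint : ∀ {g : EuclideanSpace ℝ (Fin d) → ℝ}, Continuous g →
      (∀ x, x ∉ tsupport u → g x = 0) → Integrable g :=
    fun hc h => hc.integrable_of_hasCompactSupport (HasCompactSupport.intro huc h)
  -- derivative of u * w
  have huw : ContDiff ℝ 1 (fun x => u x * w x) := hu1.mul (hw_cd.of_le (by norm_num))
  have huwc : HasCompactSupport (fun x => u x * w x) := huc.mul_right
  have hduw : ∀ x v, fderiv ℝ (fun y => u y * w y) x v
      = fderiv ℝ u x v * w x - u x * (⟪b, v⟫ * w x) := by
    intro x v
    rw [fderiv_fun_mul (hu1.differentiable (by norm_num) x) ((hw_cd.differentiable (by norm_num)) x)]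
    simp [hw_fderiv x v]
    ring
  -- the three basic integrals
  set I : ℝ := ∫ x, ‖gradient u x‖ ^ 2 * w x with hIdef
  set M : ℝ := ∫ x, (u x) ^ 2 * w x with hMdef
  set K : ℝ := ∫ x, (u x * w x) * fderiv ℝ u x b with hKdef
  set F : ℝ := ∫ x, (f x) ^ 2 * w x with hFdef
  have intK : Integrable fun x => (u x * w x) * fderiv ℝ u x b :=
    hint ((hu1.continuous.mul hw_cd.continuous).mul (hDc b))
      (fun x hx => by rw [hu0 hx]; ring)
  have intM : Integrable fun x => (u x) ^ 2 * w x :=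
    hint ((hu1.continuous.pow 2).mul hw_cd.continuous)
      (fun x hx => by rw [hu0 hx]; ring)
  have intI : Integrable fun x => ‖gradient u x‖ ^ 2 * w x :=
    hint (hgradnc.mul hw_cd.continuous)
      (fun x hx => by rw [hgrad0 hx]; simp)
  have intF : Integrable fun x => (f x) ^ 2 * w x :=
    hint ((hfc.pow 2).mul hw_cd.continuous)
      (fun x hx => by rw [hf0 hx]; ring)
  -- Step B : K = ‖b‖^2/2 * M
  have hB : K = ‖b‖ ^ 2 / 2 * M := by
    have h1 := h1_ibp (fun x => u x * w x) u b huw hu1 huc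
    have h3 : ∫ x, fderiv ℝ (fun y => u y * w y) x b * u x
        = K - ‖b‖ ^ 2 * M := by
      rw [show (fun x => fderiv ℝ (fun y => u y * w y) x b * u x)
          = fun x => (u x * w x) * fderiv ℝ u x b - ‖b‖ ^ 2 * ((u x) ^ 2 * w x) from
        funext fun x => by rw [hduw x b, real_inner_self_eq_norm_sq]; ring]
      rw [integral_sub intK (intM.const_mul _), integral_const_mul]
    rw [h3] at h1
    have hK : K = ∫ x, (u x * w x) * fderiv ℝ u x b := rfl
    rw [← hK] at h1
    linarith
  -- Step A : ∫ (u w) lap u = ‖b‖²/2 M - I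
  have intJ : ∀ i : Fin d, Integrable fun x =>
      (u x * w x) * fderiv ℝ u x (EuclideanSpace.single i 1) :=
    fun i => hint ((hu1.continuous.mul hw_cd.continuous).mul (hDc _))
      (fun x hx => by rw [hu0 hx]; ring)
  have intSq : ∀ i : Fin d, Integrable fun x =>
      (fderiv ℝ u x (EuclideanSpace.single i 1)) ^ 2 * w x :=
    fun i => hint (((hDc _).pow 2).mul hw_cd.continuous)
      (fun x hx => by rw [hfd0 _ hx]; ring)
  have intAi : ∀ i : Fin d, Integrable fun x => (u x * w x) *
      fderiv ℝ (fun y => fderiv ℝ u y (EuclideanSpace.single i 1)) x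
        (EuclideanSpace.single i 1) :=
    fun i => hint ((hu1.continuous.mul hw_cd.continuous).mul (hD2c i))
      (fun x hx => by rw [hu0 hx]; ring)
  have hA : ∫ x, (u x * w x) * lap u x = ‖b‖ ^ 2 / 2 * M - I := by
    have hAi : ∀ i : Fin d, ∫ x, (u x * w x) *
        fderiv ℝ (fun y => fderiv ℝ u y (EuclideanSpace.single i 1)) x
          (EuclideanSpace.single i 1)
        = b i * (∫ x, (u x * w x) * fderiv ℝ u x (EuclideanSpace.single i 1))
          - ∫ x, (fderiv ℝ u x (EuclideanSpace.single i 1)) ^ 2 * w x := by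
      intro i
      have h1 := h1_ibp (fun x => u x * w x)
        (fun x => fderiv ℝ u x (EuclideanSpace.single i 1)) (EuclideanSpace.single i 1)
        huw (hDcd _) (hDcs _)
      rw [h1]
      have hbi : ⟪b, (EuclideanSpace.single i 1 : EuclideanSpace ℝ (Fin d))⟫ = b i := by
        simp only [EuclideanSpace.inner_single_right, one_mul, conj_trivial]
      rw [show (fun x => fderiv ℝ (fun y => u y * w y) x (EuclideanSpace.single i 1)
            * fderiv ℝ u x (EuclideanSpace.single i 1))
          = fun x => (fderiv ℝ u x (EuclideanSpace.single i 1)) ^ 2 * w x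
            - b i * ((u x * w x) * fderiv ℝ u x (EuclideanSpace.single i 1)) from
        funext fun x => by rw [hduw x _, hbi]; ring]
      rw [integral_sub (intSq i) ((intJ i).const_mul _), integral_const_mul]
      ring
    have hsum : ∫ x, (u x * w x) * lap u x = ∑ i, ∫ x, (u x * w x) *
        fderiv ℝ (fun y => fderiv ℝ u y (EuclideanSpace.single i 1)) x
          (EuclideanSpace.single i 1) := by
      simp_rw [lap, Finset.mul_sum]
      exact integral_finset_sum _ fun i _ => intAi i
    rw [hsum]
    simp_rw [hAi]
    rw [Finset.sum_sub_distrib]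
    have hK' : ∑ i, b i * (∫ x, (u x * w x) * fderiv ℝ u x (EuclideanSpace.single i 1))
        = K := by
      have : ∀ i : Fin d, b i * (∫ x, (u x * w x) * fderiv ℝ u x (EuclideanSpace.single i 1))
          = ∫ x, b i * ((u x * w x) * fderiv ℝ u x (EuclideanSpace.single i 1)) :=
        fun i => (integral_const_mul _ _).symm
      rw [Finset.sum_congr rfl fun i _ => this i,
        ← integral_finset_sum _ fun i _ => (intJ i).const_mul _]
      rw [hKdef]
      congr 1
      funext x
      rw [hinnerb' x, Finset.mul_sum]
      exact Finset.sum_congr rfl fun i _ => by ring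
    have hI' : ∑ i, ∫ x, (fderiv ℝ u x (EuclideanSpace.single i 1)) ^ 2 * w x = I := by
      rw [← integral_finset_sum _ fun i _ => intSq i, hIdef]
      congr 1
      funext x
      rw [hnorm x, Finset.sum_mul]
    rw [hK', hI', hB]
  -- Step D : ∫ f (u w) = ε I + (1-ε) ‖b‖²/2 M
  have intLap : Integrable fun x => -ε * ((u x * w x) * lap u x) :=
    (hint ((hu1.continuous.mul hw_cd.continuous).mul hlapc)
      (fun x hx => by simp only [Pi.mul_apply]; rw [hu0 hx]; ring)).const_mul _
  have hfI : ∫ x, f x * (u x * w x) = ε * I + (1 - ε) * (‖b‖ ^ 2 / 2) * M := by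
    rw [show (fun x => f x * (u x * w x))
        = fun x => -ε * ((u x * w x) * lap u x) + (u x * w x) * fderiv ℝ u x b from
      funext fun x => by rw [hf x, hinnerb x]; ring]
    rw [integral_add intLap intK, integral_const_mul, hA]
    have hK : (∫ x, (u x * w x) * fderiv ℝ u x b) = K := rfl
    rw [hK, hB]
    ring
  -- pointwise Young inequality and integral mono
  have hb2 : (0:ℝ) < ‖b‖ ^ 2 := pow_pos (norm_pos_iff.mpr hb) 2
  have hα : (0:ℝ) < (1 - ε) * ‖b‖ ^ 2 := mul_pos (by linarith) hb2
  have hptw : ∀ x, f x * (u x * w x)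
      ≤ (1 - ε) * ‖b‖ ^ 2 / 2 * ((u x) ^ 2 * w x)
        + 1 / (2 * ((1 - ε) * ‖b‖ ^ 2)) * ((f x) ^ 2 * w x) := by
    intro x
    have hW := (hw_pos x).le
    have hsq : 0 ≤ w x * ((1 - ε) * ‖b‖ ^ 2 * u x - f x) ^ 2 :=
      mul_nonneg hW (sq_nonneg _)
    rw [← sub_nonneg]
    have key : (1 - ε) * ‖b‖ ^ 2 / 2 * ((u x) ^ 2 * w x)
          + 1 / (2 * ((1 - ε) * ‖b‖ ^ 2)) * ((f x) ^ 2 * w x) - f x * (u x * w x)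
        = (w x * ((1 - ε) * ‖b‖ ^ 2 * u x - f x) ^ 2) / (2 * ((1 - ε) * ‖b‖ ^ 2)) := by
      have h1e : (1:ℝ) - ε ≠ 0 := by linarith
      have hbne : ‖b‖ ≠ 0 := norm_ne_zero_iff.mpr hb
      field_simp
      ring
    rw [key]
    positivity
  have hmono : ∫ x, f x * (u x * w x)
      ≤ (1 - ε) * ‖b‖ ^ 2 / 2 * M + 1 / (2 * ((1 - ε) * ‖b‖ ^ 2)) * F := by
    have h := integral_mono
      (hint (hfc.mul (hu1.continuous.mul hw_cd.continuous))
        (fun x hx => by simp only [Pi.mul_apply]; rw [hu0 hx]; ring))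
      ((intM.const_mul _).add (intF.const_mul _)) hptw
    calc ∫ x, f x * (u x * w x)
        ≤ ∫ x, ((1 - ε) * ‖b‖ ^ 2 / 2 * ((u x) ^ 2 * w x)
            + 1 / (2 * ((1 - ε) * ‖b‖ ^ 2)) * ((f x) ^ 2 * w x)) := h
      _ = (1 - ε) * ‖b‖ ^ 2 / 2 * M + 1 / (2 * ((1 - ε) * ‖b‖ ^ 2)) * F := by
          rw [integral_add (intM.const_mul _) (intF.const_mul _),
            integral_const_mul, integral_const_mul]
  have hεI : ε * I ≤ 1 / (2 * ((1 - ε) * ‖b‖ ^ 2)) * F := by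
    rw [hfI] at hmono
    linarith
  -- comparison with unweighted integrals
  have intP : Integrable fun x => ‖gradient u x‖ ^ 2 :=
    hint hgradnc (fun x hx => by rw [hgrad0 hx]; simp)
  have intQ : Integrable fun x => (f x) ^ 2 :=
    hint (hfc.pow 2) (fun x hx => by rw [hf0 hx]; ring)
  have hIlow : cb * (∫ x : EuclideanSpace ℝ (Fin d), ‖gradient u x‖ ^ 2) ≤ I := by
    rw [← integral_const_mul]
    apply integral_mono (intP.const_mul _) intI
    intro x
    show cb * ‖gradient u x‖ ^ 2 ≤ ‖gradient u x‖ ^ 2 * w x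
    by_cases hx : x ∈ tsupport u
    · have h1 : cb ≤ w x := (hbound x hx).1
      nlinarith [mul_le_mul_of_nonneg_left h1 (sq_nonneg ‖gradient u x‖)]
    · rw [hgrad0 hx]; simp
  have hFup : F ≤ Cb * ∫ x : EuclideanSpace ℝ (Fin d), (f x) ^ 2 := by
    rw [← integral_const_mul]
    apply integral_mono intF (intQ.const_mul _)
    intro x
    show (f x) ^ 2 * w x ≤ Cb * (f x) ^ 2
    by_cases hx : x ∈ tsupport u
    · have h2 : w x ≤ Cb := (hbound x hx).2
      nlinarith [mul_le_mul_of_nonneg_left h2 (sq_nonneg (f x))]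
    · rw [hf0 hx]; simp
  -- final arithmetic
  have hQ : (0:ℝ) ≤ ∫ x : EuclideanSpace ℝ (Fin d), (f x) ^ 2 :=
    integral_nonneg fun x => sq_nonneg _
  have hFnn : (0:ℝ) ≤ F := by
    rw [hFdef]; exact integral_nonneg fun x => mul_nonneg (sq_nonneg _) (hw_pos x).le
  have hP : (0:ℝ) ≤ ∫ x : EuclideanSpace ℝ (Fin d), ‖gradient u x‖ ^ 2 :=
    integral_nonneg fun x => sq_nonneg _
  set P : ℝ := ∫ x : EuclideanSpace ℝ (Fin d), ‖gradient u x‖ ^ 2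
  set Q : ℝ := ∫ x : EuclideanSpace ℝ (Fin d), (f x) ^ 2
  have h2' : ε * I * (2 * ((1 - ε) * ‖b‖ ^ 2)) ≤ F := by
    rw [show (1:ℝ) / (2 * ((1 - ε) * ‖b‖ ^ 2)) * F = F / (2 * ((1 - ε) * ‖b‖ ^ 2)) by ring,
      le_div_iff₀ (by linarith)] at hεI
    exact hεI
  have hgoal : ε * P * (cb * ((1 - ε) * ‖b‖ ^ 2)) ≤ Cb * Q := by
    have t1 : ε * ((1 - ε) * ‖b‖ ^ 2) * (cb * P) ≤ ε * ((1 - ε) * ‖b‖ ^ 2) * I :=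
      mul_le_mul_of_nonneg_left hIlow (by positivity)
    nlinarith [t1, h2', hFup, hFnn]
  have hden : (0:ℝ) < cb * (1 - ε) * ‖b‖ ^ 2 := by
    have : (0:ℝ) < 1 - ε := by linarith
    positivity
  rw [div_mul_eq_mul_div, le_div_iff₀ hden]
  calc ε * P * (cb * (1 - ε) * ‖b‖ ^ 2) = ε * P * (cb * ((1 - ε) * ‖b‖ ^ 2)) := by ring
    _ ≤ Cb * Q := hgoal
end

section
/- Let d ≥ 1, 0 < ε < 1, let b ∈ ℝ^d be a nonzero constant vector, let u : ℝ^d → ℝ be twice continuously differentiable with compact support, and set f := −εΔu + ⟨b, ∇u⟩. Assume c_b ≤ exp(−⟨b,x⟩) ≤ C_b for all x in the support of u, with 0 < c_b ≤ C_b. Then (ε‖∇u‖_{L²}² + ‖u‖_{L²}²)^{1/2} ≤ [C_b / (c_b √(1−ε) ‖b‖)] · (c_b/C_b + 1/((1−ε)‖b‖²))^{1/2} · ‖f‖_{L²}. -/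
/- STATEMENT 11: a-priori estimate of Lemma 2.2 in the constant-velocity case:
(ε‖∇u‖² + ‖u‖²)^{1/2} ≤ [C_b/(c_b√(1−ε)‖b‖)] (c_b/C_b + 1/((1−ε)‖b‖²))^{1/2} ‖f‖_{L²}. -/

open MeasureTheory RealInnerProductSpace

section Aux


variable {d : ℕ}

local notation "E" => EuclideanSpace ℝ (Fin d)

lemma integrable_cc {g : E → ℝ} (hg : Continuous g) (hgc : HasCompactSupport g) :
    Integrable g := hg.integrable_of_hasCompactSupport hgc

/-- Cauchy–Schwarz for integrals of continuous compactly supported functions. -/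
lemma cs_abs {p q : E → ℝ} (hp : Continuous p) (hpc : HasCompactSupport p)
    (hq : Continuous q) (hqc : HasCompactSupport q) :
    ∫ x, |p x * q x| ≤ Real.sqrt (∫ x, (p x)^2) * Real.sqrt (∫ x, (q x)^2) := by
  have hA : Integrable (fun x => (p x)^2) :=
    integrable_cc (hp.pow 2) (hpc.comp_left (g := fun t : ℝ => t ^ 2) (by simp))
  have hB : Integrable (fun x => (q x)^2) :=
    integrable_cc (hq.pow 2) (hqc.comp_left (g := fun t : ℝ => t ^ 2) (by simp))
  have hC : Integrable (fun x => |p x * q x|) :=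
    integrable_cc (hp.mul hq).abs (hpc.mul_right.comp_left (g := abs) abs_zero)
  set A := ∫ x, (p x)^2 with hAdef
  set B := ∫ x, (q x)^2 with hBdef
  set C := ∫ x, |p x * q x| with hCdef
  have hA0 : 0 ≤ A := integral_nonneg fun x => sq_nonneg _
  have hB0 : 0 ≤ B := integral_nonneg fun x => sq_nonneg _
  have hC0 : 0 ≤ C := integral_nonneg fun x => abs_nonneg _
  have key : ∀ t : ℝ, 0 ≤ A * (t * t) + (2 * C) * t + B := by
    intro t
    have h0 : 0 ≤ ∫ x, (t * |p x| + |q x|)^2 := integral_nonneg fun x => sq_nonneg _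
    have hexp : ∀ x : E, (t * |p x| + |q x|)^2
        = (t * t) * (p x)^2 + (2 * t) * |p x * q x| + (q x)^2 := by
      intro x
      have e1 : |p x|^2 = (p x)^2 := sq_abs _
      have e2 : |q x|^2 = (q x)^2 := sq_abs _
      have e3 : |p x| * |q x| = |p x * q x| := (abs_mul _ _).symm
      rw [← e3, ← e1, ← e2]; ring
    rw [show (fun x : E => (t * |p x| + |q x|)^2)
        = fun x => (t * t) * (p x)^2 + (2 * t) * |p x * q x| + (q x)^2 from funext hexp] at h0
    rw [integral_add (f := fun x => (t * t) * (p x)^2 + (2 * t) * |p x * q x|)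
          (g := fun x => (q x)^2) ((hA.const_mul _).add (hC.const_mul _)) hB,
        integral_add (f := fun x => (t * t) * (p x)^2)
          (g := fun x => (2 * t) * |p x * q x|) (hA.const_mul _) (hC.const_mul _),
        integral_const_mul, integral_const_mul] at h0
    nlinarith [h0]
  have hdis := discrim_le_zero key
  have hCsq : C^2 ≤ A * B := by
    simp only [discrim] at hdis
    nlinarith [hdis]
  nlinarith [Real.sq_sqrt (mul_nonneg hA0 hB0), Real.sqrt_nonneg (A*B),
    Real.sqrt_mul hA0 B, sq_nonneg (C - Real.sqrt (A*B)),
    Real.sqrt_nonneg A, Real.sqrt_nonneg B]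

/-- Integration by parts. -/
lemma ibp {φ ψ : E → ℝ} (v : E) (hφ : ContDiff ℝ 1 φ) (hψ : ContDiff ℝ 1 ψ)
    (hφc : HasCompactSupport φ) :
    ∫ x, φ x * fderiv ℝ ψ x v = - ∫ x, fderiv ℝ φ x v * ψ x := by
  have hφ' : Continuous fun x => fderiv ℝ φ x v :=
    (hφ.continuous_fderiv one_ne_zero).clm_apply continuous_const
  have hψ' : Continuous fun x => fderiv ℝ ψ x v :=
    (hψ.continuous_fderiv one_ne_zero).clm_apply continuous_const
  have h1 : HasCompactSupport fun x => fderiv ℝ φ x v :=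
    hφc.fderiv_apply ℝ v
  exact integral_mul_fderiv_eq_neg_fderiv_mul_of_integrable
    (integrable_cc (hφ'.mul hψ.continuous) h1.mul_right)
    (integrable_cc (hφ.continuous.mul hψ') hφc.mul_right)
    (integrable_cc (hφ.continuous.mul hψ.continuous) hφc.mul_right)
    (fun x _ => (hφ.differentiable one_ne_zero).differentiableAt)
    (fun x _ => (hψ.differentiable one_ne_zero).differentiableAt)

lemma self_ibp {g : E → ℝ} (v : E) (hg : ContDiff ℝ 1 g) (hgc : HasCompactSupport g) :
    ∫ x, g x * fderiv ℝ g x v = 0 := by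
  have h := ibp v hg hg hgc
  have h2 : ∫ x, fderiv ℝ g x v * g x = ∫ x, g x * fderiv ℝ g x v := by
    congr 1; ext x; ring
  rw [h2] at h
  linarith

end Aux

section Main

set_option maxHeartbeats 2000000 in
theorem a_priori_estimate_constant_velocity
    (d : ℕ) (hd : 1 ≤ d) (ε : ℝ) (hε : 0 < ε) (hε1 : ε < 1)
    (b : EuclideanSpace ℝ (Fin d)) (hb : b ≠ 0)
    (u : EuclideanSpace ℝ (Fin d) → ℝ)
    (hu : ContDiff ℝ 2 u) (huc : HasCompactSupport u)
    (f : EuclideanSpace ℝ (Fin d) → ℝ)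
    (hf : ∀ x, f x = -ε * lap u x + ⟪b, gradient u x⟫)
    (cb Cb : ℝ) (hcb : 0 < cb) (hcbCb : cb ≤ Cb)
    (hbound : ∀ x ∈ tsupport u,
      cb ≤ Real.exp (-⟪b, x⟫) ∧ Real.exp (-⟪b, x⟫) ≤ Cb) :
    Real.sqrt (ε * (∫ x : EuclideanSpace ℝ (Fin d), ‖gradient u x‖ ^ 2)
        + ∫ x : EuclideanSpace ℝ (Fin d), (u x) ^ 2)
      ≤ Cb / (cb * Real.sqrt (1 - ε) * ‖b‖)
          * Real.sqrt (cb / Cb + 1 / ((1 - ε) * ‖b‖ ^ 2))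
          * Real.sqrt (∫ x : EuclideanSpace ℝ (Fin d), (f x) ^ 2) := by
  have hbn : (0:ℝ) < ‖b‖ := norm_pos_iff.mpr hb
  have hCb : (0:ℝ) < Cb := lt_of_lt_of_le hcb hcbCb
  have hε2 : (0:ℝ) < 1 - ε := by linarith
  have hu1 : ContDiff ℝ 1 u := hu.of_le one_le_two
  have hud : Differentiable ℝ u := hu1.differentiable one_ne_zero
  have hu_cont : Continuous u := hu1.continuous
  -- directional derivatives
  set du : EuclideanSpace ℝ (Fin d) → EuclideanSpace ℝ (Fin d) → ℝ :=
    fun v x => fderiv ℝ u x v with hdu_def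
  have hdu_cd : ∀ v, ContDiff ℝ 1 (du v) := fun v =>
    (hu.fderiv_right (m := 1) (by norm_num)).clm_apply contDiff_const
  have hdu_cs : ∀ v, HasCompactSupport (du v) := fun v => huc.fderiv_apply ℝ v
  have hdu_cont : ∀ v, Continuous (du v) := fun v => (hdu_cd v).continuous
  have hddu_cont : ∀ v w, Continuous fun x => fderiv ℝ (du v) x w := fun v w =>
    ((hdu_cd v).continuous_fderiv one_ne_zero).clm_apply continuous_const
  have hddu_cs : ∀ v w, HasCompactSupport fun x => fderiv ℝ (du v) x w := fun v w =>
    (hdu_cs v).fderiv_apply ℝ w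
  -- symmetry of second derivatives
  have key : ∀ (v w : EuclideanSpace ℝ (Fin d)) (x : EuclideanSpace ℝ (Fin d)),
      fderiv ℝ (du v) x w = fderiv ℝ (fderiv ℝ u) x w v := by
    intro v w x
    have hdiff : DifferentiableAt ℝ (fderiv ℝ u) x :=
      ((hu.fderiv_right (m := 1) (by norm_num)).differentiable one_ne_zero).differentiableAt
    have h1 : fderiv ℝ (fun y => (fderiv ℝ u y) ((fun _ => v) y)) x
        = (fderiv ℝ u x).comp (fderiv ℝ (fun _ : EuclideanSpace ℝ (Fin d) => v) x)
          + (fderiv ℝ (fderiv ℝ u) x).flip v :=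
      fderiv_clm_apply hdiff (differentiableAt_const v)
    have h2 : fderiv ℝ (fun _ : EuclideanSpace ℝ (Fin d) => v) x = 0 := fderiv_const_apply v
    rw [h2] at h1
    have : fderiv ℝ (du v) x = (fderiv ℝ (fderiv ℝ u) x).flip v := by
      simpa using h1
    rw [this]
    rfl
  have hsym : ∀ (v w : EuclideanSpace ℝ (Fin d)) (x : EuclideanSpace ℝ (Fin d)),
      fderiv ℝ (du v) x w = fderiv ℝ (du w) x v := by
    intro v w x
    rw [key v w x, key w v x]
    exact (hu.contDiffAt.isSymmSndFDerivAt (by norm_num)).eq w v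
  -- gradient facts
  have hgrad : ∀ (x : EuclideanSpace ℝ (Fin d)) v, ⟪gradient u x, v⟫ = fderiv ℝ u x v := by
    intro x v
    exact InnerProductSpace.toDual_symm_apply
  have hinner_b : ∀ x, ⟪b, gradient u x⟫ = du b x := by
    intro x
    rw [real_inner_comm]
    exact hgrad x b
  have hnormgrad : ∀ x, ‖gradient u x‖^2 = ∑ i, (du (EuclideanSpace.single i 1) x)^2 := by
    intro x
    have h1 : ∀ i : Fin d, gradient u x i = du (EuclideanSpace.single i 1) x := by
      intro i
      have h0 := hgrad x (EuclideanSpace.single i 1)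
      rw [EuclideanSpace.inner_single_right] at h0
      simp at h0
      exact h0
    rw [EuclideanSpace.norm_eq, Real.sq_sqrt (by positivity)]
    exact Finset.sum_congr rfl fun i _ => by rw [Real.norm_eq_abs, sq_abs, h1 i]
  have hgrad_cont : Continuous fun x => ‖gradient u x‖^2 := by
    have : Continuous fun x => ∑ i, (du (EuclideanSpace.single i 1) x)^2 :=
      continuous_finset_sum _ fun i _ => (hdu_cont _).pow 2
    simpa only [← hnormgrad] using this
  -- lap facts
  have hlap_eq : ∀ x, lap u x = ∑ i, fderiv ℝ (du (EuclideanSpace.single i 1)) x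
      (EuclideanSpace.single i 1) := fun x => rfl
  have hlap_cont : Continuous (lap u) := by
    have : Continuous fun x => ∑ i, fderiv ℝ (du (EuclideanSpace.single i 1)) x
        (EuclideanSpace.single i 1) := continuous_finset_sum _ fun i _ => hddu_cont _ _
    simpa only [← hlap_eq] using this
  have hsupp_dd : ∀ v w, Function.support (fun x => fderiv ℝ (du v) x w) ⊆ tsupport u := by
    intro v w x hx
    have h1 : x ∈ Function.support (fderiv ℝ (du v)) := by
      intro h0
      exact hx (by simp [h0])
    have h2 : x ∈ tsupport (du v) := support_fderiv_subset ℝ h1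
    have h3 : tsupport (du v) ⊆ tsupport (fderiv ℝ u) := by
      apply closure_minimal _ isClosed_closure
      intro y hy
      apply subset_closure
      intro h0
      exact hy (by simp [hdu_def, h0])
    exact tsupport_fderiv_subset ℝ (h3 h2)
  have hlap_cs : HasCompactSupport (lap u) := by
    apply huc.mono'
    intro x hx
    by_contra hxt
    apply hx
    rw [hlap_eq]
    exact Finset.sum_eq_zero fun i _ => by
      by_contra h0
      exact hxt (hsupp_dd _ _ h0)
  -- f facts
  have hf' : f = fun x => -ε * lap u x + du b x :=
    funext fun x => by rw [hf x, hinner_b x]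
  have hfc : Continuous f := by
    rw [hf']; exact (continuous_const.mul hlap_cont).add (hdu_cont b)
  have hfcs : HasCompactSupport f := by
    rw [hf']
    exact ((hlap_cs.comp_left (g := fun t : ℝ => -ε * t) (by simp)).add (hdu_cs b))
  -- main quantities
  set P := ∫ x : EuclideanSpace ℝ (Fin d), ‖gradient u x‖ ^ 2 with hP_def
  set Q := ∫ x : EuclideanSpace ℝ (Fin d), (u x) ^ 2 with hQ_def
  set F2 := ∫ x : EuclideanSpace ℝ (Fin d), (f x) ^ 2 with hF2_def
  set R := ∫ x : EuclideanSpace ℝ (Fin d), (du b x) ^ 2 with hR_def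
  have hQ0 : 0 ≤ Q := integral_nonneg fun x => sq_nonneg _
  have hF20 : 0 ≤ F2 := integral_nonneg fun x => sq_nonneg _
  have hR0 : 0 ≤ R := integral_nonneg fun x => sq_nonneg _
  -- identity: ∫ u * lap u = -P
  have hulap : ∫ x : EuclideanSpace ℝ (Fin d), u x * lap u x = -P := by
    have h1 : (fun x : EuclideanSpace ℝ (Fin d) => u x * lap u x)
        = fun x => ∑ i, u x * fderiv ℝ (du (EuclideanSpace.single i 1)) x
          (EuclideanSpace.single i 1) := by
      funext x; rw [hlap_eq, Finset.mul_sum]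
    rw [h1, integral_finset_sum _ (fun i _ =>
      (integrable_cc (hu_cont.mul (hddu_cont _ _)) huc.mul_right : Integrable fun x =>
        u x * fderiv ℝ (du (EuclideanSpace.single i 1)) x (EuclideanSpace.single i 1)))]
    have h2 : ∀ i : Fin d, (∫ x : EuclideanSpace ℝ (Fin d),
        u x * fderiv ℝ (du (EuclideanSpace.single i 1)) x (EuclideanSpace.single i 1))
        = - ∫ x : EuclideanSpace ℝ (Fin d), (du (EuclideanSpace.single i 1) x)^2 := by
      intro i
      have h3 := ibp (EuclideanSpace.single i 1) hu1 (hdu_cd (EuclideanSpace.single i 1)) huc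
      rw [h3]
      congr 1
      apply integral_congr_ae
      filter_upwards with x
      rw [sq]
    rw [Finset.sum_congr rfl fun i _ => h2 i, Finset.sum_neg_distrib,
      ← integral_finset_sum _ (fun i _ =>
        integrable_cc (g := fun x => (du (EuclideanSpace.single i 1) x)^2)
          ((hdu_cont _).pow 2) ((hdu_cs _).comp_left (g := fun t : ℝ => t^2) (by simp)))]
    rw [hP_def]
    congr 1
    apply integral_congr_ae
    filter_upwards with x
    rw [hnormgrad x]
  -- identity: ∫ u * du b = 0
  have hI1 : ∫ x : EuclideanSpace ℝ (Fin d), u x * du b x = 0 := self_ibp b hu1 huc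
  -- identity: ∫ lap u * du b = 0
  have hI3 : ∫ x : EuclideanSpace ℝ (Fin d), lap u x * du b x = 0 := by
    have h1 : (fun x : EuclideanSpace ℝ (Fin d) => lap u x * du b x)
        = fun x => ∑ i, du b x * fderiv ℝ (du (EuclideanSpace.single i 1)) x
          (EuclideanSpace.single i 1) := by
      funext x; rw [hlap_eq, Finset.sum_mul]
      exact Finset.sum_congr rfl fun i _ => mul_comm _ _
    rw [h1, integral_finset_sum _ (fun i _ =>
      (integrable_cc ((hdu_cont b).mul (hddu_cont _ _)) (hdu_cs b).mul_right : Integrable fun x =>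
        du b x * fderiv ℝ (du (EuclideanSpace.single i 1)) x (EuclideanSpace.single i 1)))]
    apply Finset.sum_eq_zero
    intro i _
    rw [ibp (EuclideanSpace.single i 1) (hdu_cd b) (hdu_cd (EuclideanSpace.single i 1)) (hdu_cs b)]
    have h4 : (fun x : EuclideanSpace ℝ (Fin d) =>
        fderiv ℝ (du b) x (EuclideanSpace.single i 1) * du (EuclideanSpace.single i 1) x)
        = fun x => du (EuclideanSpace.single i 1) x *
          fderiv ℝ (du (EuclideanSpace.single i 1)) x b := by
      funext x
      rw [hsym b (EuclideanSpace.single i 1) x, mul_comm]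
    rw [h4, self_ibp b (hdu_cd _) (hdu_cs _), neg_zero]
  -- energy identity : ∫ u f = ε P
  have hEnergy : ∫ x : EuclideanSpace ℝ (Fin d), u x * f x = ε * P := by
    have h1 : (fun x : EuclideanSpace ℝ (Fin d) => u x * f x)
        = fun x => (-ε) * (u x * lap u x) + u x * du b x := by
      funext x; rw [hf x, hinner_b x]; ring
    rw [h1, integral_add (μ := volume) (f := fun x => (-ε) * (u x * lap u x)) (g := fun x => u x * du b x)
      ((integrable_cc (hu_cont.mul hlap_cont) huc.mul_right :
        Integrable fun x => u x * lap u x).const_mul _)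
      (integrable_cc (hu_cont.mul (hdu_cont b)) huc.mul_right : Integrable fun x => u x * du b x),
      integral_const_mul, hulap, hI1]
    ring
  -- R ≤ F2
  have hRF : R ≤ F2 := by
    have h1 : (fun x : EuclideanSpace ℝ (Fin d) => (f x)^2)
        = fun x => ε^2 * (lap u x)^2 + (-(2*ε)) * (lap u x * du b x) + (du b x)^2 := by
      funext x; rw [hf x, hinner_b x]; ring
    have hint1 : Integrable (fun x : EuclideanSpace ℝ (Fin d) => (lap u x)^2) :=
      integrable_cc (hlap_cont.pow 2) (hlap_cs.comp_left (g := fun t : ℝ => t^2) (by simp))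
    have hint2 : Integrable (fun x : EuclideanSpace ℝ (Fin d) => lap u x * du b x) :=
      integrable_cc (hlap_cont.mul (hdu_cont b)) hlap_cs.mul_right
    have hint3 : Integrable (fun x : EuclideanSpace ℝ (Fin d) => (du b x)^2) :=
      integrable_cc ((hdu_cont b).pow 2) ((hdu_cs b).comp_left (g := fun t : ℝ => t^2) (by simp))
    have h2 : F2 = ε^2 * (∫ x : EuclideanSpace ℝ (Fin d), (lap u x)^2)
        + (-(2*ε)) * (∫ x : EuclideanSpace ℝ (Fin d), lap u x * du b x) + R := by
      rw [hF2_def, h1,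
        integral_add (f := fun x => ε^2 * (lap u x)^2 + (-(2*ε)) * (lap u x * du b x))
          (g := fun x => (du b x)^2) ((hint1.const_mul _).add (hint2.const_mul _)) hint3,
        integral_add (f := fun x => ε^2 * (lap u x)^2)
          (g := fun x => (-(2*ε)) * (lap u x * du b x)) (hint1.const_mul _) (hint2.const_mul _),
        integral_const_mul, integral_const_mul]
    have h3 : 0 ≤ ∫ x : EuclideanSpace ℝ (Fin d), (lap u x)^2 :=
      integral_nonneg fun x => sq_nonneg _
    rw [h2, hI3]
    nlinarith [h3]
  -- Poincaré inequality
  set e : EuclideanSpace ℝ (Fin d) := ‖b‖⁻¹ • b with he_def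
  have hdue : ∀ x, du e x = ‖b‖⁻¹ * du b x := by
    intro x
    rw [hdu_def]
    simp [he_def]
  set L := (Real.log Cb - Real.log cb) / ‖b‖ with hL_def
  have hlog : Real.log cb ≤ Real.log Cb := Real.log_le_log hcb hcbCb
  have hL0 : 0 ≤ L := div_nonneg (by linarith) hbn.le
  set χ : EuclideanSpace ℝ (Fin d) → ℝ := fun x => ⟪e, x⟫ + Real.log Cb / ‖b‖ with hχ_def
  have hχd : ∀ x : EuclideanSpace ℝ (Fin d), HasFDerivAt χ (innerSL ℝ e) x := fun x =>
    ((innerSL ℝ e).hasFDerivAt).add_const _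
  have hχcd : ContDiff ℝ 1 χ := ((innerSL ℝ e).contDiff).add contDiff_const
  have hee : ⟪e, e⟫ = 1 := by
    have hb0 : ‖b‖ ≠ 0 := ne_of_gt hbn
    rw [he_def, real_inner_smul_left, real_inner_smul_right, real_inner_self_eq_norm_sq]
    field_simp
  have hχe : ∀ x, fderiv ℝ χ x e = 1 := by
    intro x
    rw [(hχd x).fderiv]
    exact hee
  set φ : EuclideanSpace ℝ (Fin d) → ℝ := fun x => u x * u x with hφ_def
  have hφcd : ContDiff ℝ 1 φ := hu1.mul hu1
  have hφcs : HasCompactSupport φ := huc.mul_right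
  have hφe : ∀ x, fderiv ℝ φ x e = 2 * (u x * du e x) := by
    intro x
    rw [hφ_def]
    have := fderiv_mul (hud.differentiableAt (x := x)) (hud.differentiableAt (x := x))
    rw [show fderiv ℝ (fun y => u y * u y) x = u x • fderiv ℝ u x + u x • fderiv ℝ u x from this]
    simp [hdu_def]
    ring
  have hPoin : Q ≤ 2 * L * ∫ x : EuclideanSpace ℝ (Fin d), |u x * du e x| := by
    have h1 := ibp e hφcd hχcd hφcs
    have h2 : ∫ x : EuclideanSpace ℝ (Fin d), φ x * fderiv ℝ χ x e = Q := by
      rw [hQ_def]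
      apply integral_congr_ae
      filter_upwards with x
      rw [hχe x, hφ_def, sq]
      ring
    have h3 : Q = - ∫ x : EuclideanSpace ℝ (Fin d), fderiv ℝ φ x e * χ x := by
      rw [← h2, h1]
    have h4 : Q ≤ ∫ x : EuclideanSpace ℝ (Fin d), |fderiv ℝ φ x e * χ x| := by
      rw [h3]
      calc - ∫ x : EuclideanSpace ℝ (Fin d), fderiv ℝ φ x e * χ x
          ≤ |∫ x : EuclideanSpace ℝ (Fin d), fderiv ℝ φ x e * χ x| := neg_le_abs _
        _ ≤ ∫ x : EuclideanSpace ℝ (Fin d), |fderiv ℝ φ x e * χ x| :=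
            by
              have := norm_integral_le_integral_norm
                (fun x : EuclideanSpace ℝ (Fin d) => fderiv ℝ φ x e * χ x) (μ := volume)
              simp only [Real.norm_eq_abs] at this
              exact this
    have hφe_cont : Continuous fun x => fderiv ℝ φ x e :=
      (hφcd.continuous_fderiv one_ne_zero).clm_apply continuous_const
    have hφe_cs : HasCompactSupport fun x => fderiv ℝ φ x e := hφcs.fderiv_apply ℝ e
    have h5 : ∫ x : EuclideanSpace ℝ (Fin d), |fderiv ℝ φ x e * χ x|
        ≤ ∫ x : EuclideanSpace ℝ (Fin d), 2 * L * |u x * du e x| := by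
      apply integral_mono
      · exact (integrable_cc (hφe_cont.mul hχcd.continuous) hφe_cs.mul_right).abs
      · exact (integrable_cc ((hu_cont.mul (hdu_cont e)).abs)
          ((huc.mul_right).comp_left (g := abs) abs_zero)).const_mul _
      · intro x
        show |fderiv ℝ φ x e * χ x| ≤ 2 * L * |u x * du e x|
        by_cases hx : x ∈ tsupport u
        · obtain ⟨hlo, hhi⟩ := hbound x hx
          have hlo' : Real.log cb ≤ -⟪b, x⟫ := by
            have := Real.log_le_log hcb hlo
            rwa [Real.log_exp] at this
          have hhi' : -⟪b, x⟫ ≤ Real.log Cb := by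
            have := Real.log_le_log (Real.exp_pos _) hhi
            rwa [Real.log_exp] at this
          have hebx : ⟪e, x⟫ = ‖b‖⁻¹ * ⟪b, x⟫ := by
            rw [he_def, real_inner_smul_left]
          have hχlo : 0 ≤ χ x := by
            simp only [hχ_def]
            rw [hebx]
            have h7 : -Real.log Cb ≤ ⟪b, x⟫ := by linarith
            have h8 : ‖b‖⁻¹ * ⟪b, x⟫ + Real.log Cb / ‖b‖
                = (⟪b, x⟫ + Real.log Cb) / ‖b‖ := by
              field_simp
            rw [h8]
            exact div_nonneg (by linarith) hbn.le
          have hχhi : χ x ≤ L := by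
            simp only [hχ_def]
            rw [hebx, hL_def]
            have h7 : ⟪b, x⟫ ≤ -Real.log cb := by linarith
            have h8 : ‖b‖⁻¹ * ⟪b, x⟫ + Real.log Cb / ‖b‖
                = (⟪b, x⟫ + Real.log Cb) / ‖b‖ := by
              field_simp
            rw [h8]
            gcongr
            linarith
          rw [hφe x, abs_mul]
          have : |fderiv ℝ φ x e| = 2 * |u x * du e x| := by
            rw [hφe x, abs_mul, abs_two]
          calc |2 * (u x * du e x)| * |χ x|
              ≤ |2 * (u x * du e x)| * L := by
                apply mul_le_mul_of_nonneg_left _ (abs_nonneg _)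
                rw [abs_of_nonneg hχlo]; exact hχhi
            _ = 2 * L * |u x * du e x| := by rw [abs_mul, abs_two]; ring
        · have hux : u x = 0 := image_eq_zero_of_notMem_tsupport hx
          rw [hφe x, hux]
          simp
    calc Q ≤ ∫ x : EuclideanSpace ℝ (Fin d), |fderiv ℝ φ x e * χ x| := h4
      _ ≤ ∫ x : EuclideanSpace ℝ (Fin d), 2 * L * |u x * du e x| := h5
      _ = 2 * L * ∫ x : EuclideanSpace ℝ (Fin d), |u x * du e x| := integral_const_mul _ _
  -- from Poincaré to Q ≤ (2L/‖b‖)² F2-type bound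
  have hH : ∫ x : EuclideanSpace ℝ (Fin d), (du e x)^2 = ‖b‖⁻¹^2 * R := by
    rw [hR_def, ← integral_const_mul]
    apply integral_congr_ae
    filter_upwards with x
    rw [hdue x]
    ring
  have hCS_ue : ∫ x : EuclideanSpace ℝ (Fin d), |u x * du e x|
      ≤ Real.sqrt Q * Real.sqrt (‖b‖⁻¹^2 * R) := by
    rw [← hH, hQ_def]
    exact cs_abs hu_cont huc (hdu_cont e) (hdu_cs e)
  have hsqrtH : Real.sqrt (‖b‖⁻¹^2 * R) = ‖b‖⁻¹ * Real.sqrt R := by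
    rw [Real.sqrt_mul (sq_nonneg _), Real.sqrt_sq (inv_nonneg.mpr hbn.le)]
  have hQle : Q ≤ 2 * L * ‖b‖⁻¹ * (Real.sqrt Q * Real.sqrt R) := by
    calc Q ≤ 2 * L * ∫ x : EuclideanSpace ℝ (Fin d), |u x * du e x| := hPoin
      _ ≤ 2 * L * (Real.sqrt Q * Real.sqrt (‖b‖⁻¹^2 * R)) := by
          apply mul_le_mul_of_nonneg_left hCS_ue (by positivity)
      _ = 2 * L * ‖b‖⁻¹ * (Real.sqrt Q * Real.sqrt R) := by rw [hsqrtH]; ring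
  have hsQ : Real.sqrt Q ≤ 2 * L * ‖b‖⁻¹ * Real.sqrt R := by
    rcases eq_or_lt_of_le hQ0 with hQz | hQpos
    · rw [← hQz, Real.sqrt_zero]
      positivity
    · have hsQpos : 0 < Real.sqrt Q := Real.sqrt_pos.mpr hQpos
      have : Real.sqrt Q * Real.sqrt Q ≤ (2 * L * ‖b‖⁻¹ * Real.sqrt R) * Real.sqrt Q := by
        rw [Real.mul_self_sqrt hQ0]
        calc Q ≤ 2 * L * ‖b‖⁻¹ * (Real.sqrt Q * Real.sqrt R) := hQle
          _ = (2 * L * ‖b‖⁻¹ * Real.sqrt R) * Real.sqrt Q := by ring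
      exact le_of_mul_le_mul_right this hsQpos
  -- scalar inequality : 2 L / ‖b‖ ≤ m
  set m := Cb / (cb * (1 - ε) * ‖b‖^2) with hm_def
  have hm0 : 0 < m := by
    rw [hm_def]; positivity
  have hscal : 2 * L * ‖b‖⁻¹ ≤ m := by
    set c := Cb / cb with hc_def
    have hc1 : 1 ≤ c := (one_le_div hcb).mpr hcbCb
    have hc0 : 0 < c := lt_of_lt_of_le one_pos hc1
    have hlogc : Real.log Cb - Real.log cb = Real.log c := by
      rw [hc_def, Real.log_div (ne_of_gt hCb) (ne_of_gt hcb)]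
    have h2logc : 2 * Real.log c ≤ c := by
      have h1 : Real.log (Real.sqrt c) = Real.log c / 2 := Real.log_sqrt hc0.le
      have h2 : Real.log (Real.sqrt c) ≤ Real.sqrt c - 1 :=
        Real.log_le_sub_one_of_pos (Real.sqrt_pos.mpr hc0)
      nlinarith [sq_nonneg (Real.sqrt c - 2), Real.sq_sqrt hc0.le]
    have hlogc0 : 0 ≤ Real.log c := Real.log_nonneg hc1
    -- 2 L ‖b‖⁻¹ = 2 log c / ‖b‖²  and  m = c / ((1-ε) ‖b‖²)
    have hLHS : 2 * L * ‖b‖⁻¹ = 2 * Real.log c / ‖b‖^2 := by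
      rw [hL_def, hlogc, ← mul_div_assoc, ← one_div, div_mul_div_comm, mul_one, ← sq]
    have hm' : m = c / ((1 - ε) * ‖b‖^2) := by
      rw [hm_def, hc_def, div_div, mul_assoc]
    rw [hLHS, hm']
    rw [div_le_div_iff₀ (by positivity) (by positivity)]
    have hn2 : (0:ℝ) ≤ ‖b‖^2 := sq_nonneg _
    nlinarith [mul_nonneg (sub_nonneg.mpr h2logc) hn2,
      mul_nonneg (mul_nonneg hlogc0 hε.le) hn2]
  -- conclude
  have hsR : Real.sqrt R ≤ Real.sqrt F2 := Real.sqrt_le_sqrt hRF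
  have hsQm : Real.sqrt Q ≤ m * Real.sqrt F2 := by
    calc Real.sqrt Q ≤ 2 * L * ‖b‖⁻¹ * Real.sqrt R := hsQ
      _ ≤ m * Real.sqrt F2 := by
          apply mul_le_mul hscal hsR (Real.sqrt_nonneg _) hm0.le
  have hQm : Q ≤ m^2 * F2 := by
    have h1 : Real.sqrt Q ^ 2 ≤ (m * Real.sqrt F2)^2 := by
      apply sq_le_sq' _ hsQm
      nlinarith [Real.sqrt_nonneg Q]
    rw [Real.sq_sqrt hQ0] at h1
    calc Q ≤ (m * Real.sqrt F2)^2 := h1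
      _ = m^2 * F2 := by rw [mul_pow, Real.sq_sqrt hF20]
  have hPm : ε * P ≤ m * F2 := by
    have h1 : ε * P ≤ ∫ x : EuclideanSpace ℝ (Fin d), |u x * f x| := by
      rw [← hEnergy]
      calc ∫ x : EuclideanSpace ℝ (Fin d), u x * f x
          ≤ |∫ x : EuclideanSpace ℝ (Fin d), u x * f x| := le_abs_self _
        _ ≤ ∫ x : EuclideanSpace ℝ (Fin d), |u x * f x| := by
              have := norm_integral_le_integral_norm
                (fun x : EuclideanSpace ℝ (Fin d) => u x * f x) (μ := volume)
              simp only [Real.norm_eq_abs] at this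
              exact this
    have h2 : ∫ x : EuclideanSpace ℝ (Fin d), |u x * f x| ≤ Real.sqrt Q * Real.sqrt F2 := by
      rw [hQ_def, hF2_def]
      exact cs_abs hu_cont huc hfc hfcs
    calc ε * P ≤ Real.sqrt Q * Real.sqrt F2 := le_trans h1 h2
      _ ≤ (m * Real.sqrt F2) * Real.sqrt F2 := by
          apply mul_le_mul_of_nonneg_right hsQm (Real.sqrt_nonneg _)
      _ = m * (Real.sqrt F2 * Real.sqrt F2) := by ring
      _ = m * F2 := by rw [Real.mul_self_sqrt hF20]
  -- final constant computation
  set K := Cb / (cb * Real.sqrt (1 - ε) * ‖b‖)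
      * Real.sqrt (cb / Cb + 1 / ((1 - ε) * ‖b‖ ^ 2)) with hK_def
  have hK0 : 0 ≤ K := by
    rw [hK_def]
    positivity
  have hK2 : K^2 = m + m^2 := by
    rw [hK_def, mul_pow, div_pow, mul_pow, mul_pow,
      Real.sq_sqrt (by positivity : (0:ℝ) ≤ cb / Cb + 1 / ((1 - ε) * ‖b‖ ^ 2)),
      Real.sq_sqrt hε2.le, hm_def]
    field_simp
  calc Real.sqrt (ε * P + Q) ≤ Real.sqrt ((m + m^2) * F2) := by
        apply Real.sqrt_le_sqrt
        nlinarith [hPm, hQm]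
    _ = Real.sqrt (K^2 * F2) := by rw [hK2]
    _ = Real.sqrt (K^2) * Real.sqrt F2 := Real.sqrt_mul (sq_nonneg _) _
    _ = K * Real.sqrt F2 := by rw [Real.sqrt_sq hK0]

end Main
end

section
/- Let V and H be real Hilbert spaces, ι : V → H a continuous linear map with dense range, and a : V × V → ℝ a bounded bilinear form which is coercive, i.e., there is α > 0 with a(v,v) ≥ α‖v‖_V² for all v ∈ V. Let T : H → V be a linear map satisfying a(Tf, v) = ⟨f, ιv⟩_H for all f ∈ H and v ∈ V. Let S ⊆ H be a finite-dimensional subspace, let P : H → H be the orthogonal projection onto S, and assume that for every s ∈ S there exists v ∈ V with P(ιv) = s. Then T(S) = { v ∈ V : a(v, w) = 0 for every w ∈ V with P(ιw) = 0 }. -/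
/- STATEMENT 15: characterization of the ideal ansatz space: for a bounded coercive
bilinear form a on a Hilbert space V, a solution operator T : H → V with
a(Tf, v) = ⟨f, ιv⟩_H, and a finite-dimensional subspace S ⊆ H whose orthogonal
projection P is surjective from ι(V) onto S, one has
T(S) = {v ∈ V : a(v,w) = 0 for all w with P(ιw) = 0}. -/

open MeasureTheory

theorem ideal_space_characterization
    (V H : Type*)
    [NormedAddCommGroup V] [InnerProductSpace ℝ V] [CompleteSpace V]
    [NormedAddCommGroup H] [InnerProductSpace ℝ H] [CompleteSpace H]
    (ι : V →L[ℝ] H) (hι : DenseRange ι)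
    (a : V →ₗ[ℝ] V →ₗ[ℝ] ℝ)
    (Ca : ℝ) (hbdd : ∀ u v : V, |a u v| ≤ Ca * ‖u‖ * ‖v‖)
    (α : ℝ) (hα : 0 < α) (hcoercive : ∀ v : V, α * ‖v‖ ^ 2 ≤ a v v)
    (T : H →ₗ[ℝ] V)
    (hT : ∀ (f : H) (v : V), a (T f) v = inner ℝ f (ι v))
    (S : Submodule ℝ H) [FiniteDimensional ℝ S]
    (hproj : ∀ s ∈ S, ∃ v : V, (Submodule.orthogonalProjectionOnto S (ι v) : H) = s) :
    T '' (S : Set H)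
      = {v : V | ∀ w : V, (Submodule.orthogonalProjectionOnto S (ι w) : H) = 0 → a v w = 0} := by
  -- inner product against elements of S only sees the projection
  have hPinner : ∀ f ∈ S, ∀ x : H,
      (inner ℝ f x : ℝ) = inner ℝ f ((Submodule.orthogonalProjectionOnto S x : H)) := by
    intro f hf x
    have h1 : x - (Submodule.orthogonalProjectionOnto S x : H) ∈ Sᗮ :=
      Submodule.sub_starProjection_mem_orthogonal (K := S) x
    have h2 : (inner ℝ f (x - (Submodule.orthogonalProjectionOnto S x : H)) : ℝ) = 0 := h1 f hf
    rw [inner_sub_right] at h2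
    linarith
  -- coercivity: a u u = 0 → u = 0
  have hzeroV : ∀ u : V, a u u = 0 → u = 0 := by
    intro u hu
    have h1 := hcoercive u
    rw [hu] at h1
    have h2 : ‖u‖ ^ 2 = 0 := by nlinarith [sq_nonneg ‖u‖]
    simpa [sq] using h2
  -- density: f ⟂ range ι → f = 0
  have hzeroH : ∀ f : H, (∀ v : V, (inner ℝ f (ι v) : ℝ) = 0) → f = 0 := by
    intro f hf
    have hcl : IsClosed {x : H | (inner ℝ f x : ℝ) = 0} :=
      isClosed_eq (Continuous.inner continuous_const continuous_id) continuous_const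
    have hsub : Set.range ι ⊆ {x : H | (inner ℝ f x : ℝ) = 0} := by
      rintro _ ⟨v, rfl⟩; exact hf v
    have hall : ∀ x : H, (inner ℝ f x : ℝ) = 0 := by
      intro x
      have : x ∈ closure (Set.range ι) := by
        rw [hι.closure_range]; trivial
      exact hcl.closure_subset_iff.mpr hsub this
    exact inner_self_eq_zero.mp (hall f)
  -- the endomorphism φ : S → S
  let φ : S →ₗ[ℝ] S :=
    (Submodule.orthogonalProjectionOnto S).toLinearMap.comp (ι.toLinearMap.comp (T.comp S.subtype))
  have hφinj : Function.Injective φ := by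
    rw [← LinearMap.ker_eq_bot, LinearMap.ker_eq_bot']
    intro s hs
    have hs' : (Submodule.orthogonalProjectionOnto S (ι (T (s : H))) : H) = 0 := by
      have : ((φ s : S) : H) = ((0 : S) : H) := by rw [hs]
      simpa [φ] using this
    have haTT : a (T (s : H)) (T (s : H)) = 0 := by
      rw [hT, hPinner (s : H) s.2, hs', inner_zero_right]
    have hT0 : T (s : H) = 0 := hzeroV _ haTT
    have : (s : H) = 0 := by
      apply hzeroH
      intro v
      rw [← hT, hT0, map_zero, LinearMap.zero_apply]
    exact Subtype.ext this
  have hφsurj : Function.Surjective φ :=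
    (LinearMap.injective_iff_surjective).mp hφinj
  ext v
  constructor
  · rintro ⟨f, hf, rfl⟩ w hw
    rw [hT, hPinner f hf, hw, inner_zero_right]
  · intro hv
    obtain ⟨s, hs⟩ := hφsurj (Submodule.orthogonalProjectionOnto S (ι v))
    refine ⟨(s : H), s.2, ?_⟩
    have hs' : (Submodule.orthogonalProjectionOnto S (ι (T (s : H))) : H)
        = (Submodule.orthogonalProjectionOnto S (ι v) : H) := by
      have : ((φ s : S) : H) = ((Submodule.orthogonalProjectionOnto S (ι v) : S) : H) := by rw [hs]
      simpa [φ] using this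
    have hw : (Submodule.orthogonalProjectionOnto S (ι (T (s : H) - v)) : H) = 0 := by
      rw [map_sub, map_sub, Submodule.coe_sub, hs', sub_self]
    have h1 : a v (T (s : H) - v) = 0 := hv _ hw
    have h2 : a (T (s : H)) (T (s : H) - v) = 0 := by
      rw [hT, hPinner (s : H) s.2, hw, inner_zero_right]
    have h3 : a (T (s : H) - v) (T (s : H) - v) = 0 := by
      rw [show a (T (s : H) - v) = a (T (s : H)) - a v from map_sub a _ _,
        LinearMap.sub_apply, h2, h1, sub_zero]
    have := hzeroV _ h3
    exact sub_eq_zero.mp this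
end
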